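/- Let κ < 0. For every ε > 0 there exists M > 0 such that: whenever λ > M and u is an S⁺₁-solution of problem (P) for parameters (κ, λ), one has |u'(0) − 1/√(−κ)| < ε. That is, the initial slope u'_λ(0) of the positive solution tends to 1/√(−κ) as λ → ∞. -/

import Mathlib

open Set Real Filter

noncomputable section

/-- `u` is twice continuously differentiable on `[a,b]`, satisfies
`1 + κ (u')² > 0` and the ODE `-u'' = λ u (1 + κ (u')²)^(3/2)` on `[a,b]`. -/
def SolODE (κ lam : ℝ) (u : ℝ → ℝ) (a b : ℝ) : Prop :=
  (∀ x ∈ Set.Icc a b, DifferentiableAt ℝ u x) ∧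
  (∀ x ∈ Set.Icc a b, DifferentiableAt ℝ (deriv u) x) ∧
  ContinuousOn (deriv (deriv u)) (Set.Icc a b) ∧
  (∀ x ∈ Set.Icc a b, 0 < 1 + κ * (deriv u x) ^ 2) ∧
  (∀ x ∈ Set.Icc a b,
    -(deriv (deriv u) x) = lam * u x * (1 + κ * (deriv u x) ^ 2) ^ ((3 : ℝ) / 2))

/-- `u` is a solution of problem (P) on `[0,1]` with Dirichlet boundary conditions. -/
def SolP (κ lam : ℝ) (u : ℝ → ℝ) : Prop :=
  SolODE κ lam u 0 1 ∧ u 0 = 0 ∧ u 1 = 0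

/-- `u` is an `S⁺ₙ`-solution of problem (P): a nontrivial solution with exactly
`n - 1` zeros in `(0,1)`, all zeros in `[0,1]` simple, and positive near `0`. -/
def SPlus (κ lam : ℝ) (n : ℕ) (u : ℝ → ℝ) : Prop :=
  SolP κ lam u ∧
  (∃ x ∈ Set.Icc (0 : ℝ) 1, u x ≠ 0) ∧
  {x ∈ Set.Ioo (0 : ℝ) 1 | u x = 0}.ncard = n - 1 ∧
  (∀ τ ∈ Set.Icc (0 : ℝ) 1, u τ = 0 → deriv u τ ≠ 0) ∧
  (∃ δ > 0, ∀ x ∈ Set.Ioo (0 : ℝ) δ, 0 < u x)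

/-- The constant `B = ∫₀¹ dθ/√(θ⁻⁴ - 1)`. -/
def Bconst : ℝ := ∫ θ in (0 : ℝ)..1, 1 / Real.sqrt ((θ ^ 4)⁻¹ - 1)

/-- The sup-norm of `u` over `[0,1]`. -/
def supNorm (u : ℝ → ℝ) : ℝ := sSup ((fun x => |u x|) '' Set.Icc (0 : ℝ) 1)

/-- The time map `J(λ, ξ) = √(-κ) ∫₀¹ ξ/√(1 - (1 - λκξ²(1-θ²)/2)⁻²) dθ`. -/
def Jmap (κ lam ξ : ℝ) : ℝ :=
  Real.sqrt (-κ) *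
    ∫ θ in (0 : ℝ)..1,
      ξ / Real.sqrt (1 - ((1 - lam * κ / 2 * ξ ^ 2 * (1 - θ ^ 2))⁻¹) ^ 2)

open Topology in
lemma uPos {κ lam : ℝ} {u : ℝ → ℝ} (hu : SPlus κ lam 1 u) :
    ∀ x ∈ Ioo (0:ℝ) 1, 0 < u x := by
  obtain ⟨⟨⟨hd1, hd2, hc2, hpos, hode⟩, hb0, hb1⟩, _, hncard, hsimple, δ, hδ, hposδ⟩ := hu
  set Z : Set ℝ := {x ∈ Set.Ioo (0 : ℝ) 1 | u x = 0} with hZdef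
  have hZsub : Z ⊆ Icc (0:ℝ) 1 := fun x hx => Ioo_subset_Icc_self hx.1
  -- Z is finite
  have hZfin : Z.Finite := by
    by_contra hinf
    have hinf : Z.Infinite := hinf
    obtain ⟨τ, hτK, hacc⟩ :=
      hinf.exists_accPt_of_subset_isCompact isCompact_Icc hZsub
    have hneBot : (𝓝[Z \ {τ}] τ).NeBot := by
      rw [accPt_iff_frequently] at hacc
      have : {y : ℝ | y ≠ τ ∧ y ∈ Z} = Z \ {τ} := by
        ext y; simp [and_comm]
      rw [frequently_iff_neBot, ← nhdsWithin, this] at hacc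
      exact hacc
    have hle : 𝓝[Z \ {τ}] τ ≤ 𝓝[≠] τ :=
      nhdsWithin_mono τ (fun y hy => hy.2)
    have huτ : u τ = 0 := by
      have h1 : Tendsto u (𝓝[Z \ {τ}] τ) (𝓝 (u τ)) :=
        ((hd1 τ hτK).continuousAt.tendsto).mono_left nhdsWithin_le_nhds
      have h2 : Tendsto u (𝓝[Z \ {τ}] τ) (𝓝 0) := by
        apply Tendsto.congr' _ tendsto_const_nhds
        filter_upwards [self_mem_nhdsWithin] with y hy
        exact hy.1.2.symm
      exact tendsto_nhds_unique h1 h2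
    have hderiv : deriv u τ = 0 := by
      have h1 : Tendsto (slope u τ) (𝓝[≠] τ) (𝓝 (deriv u τ)) :=
        hasDerivAt_iff_tendsto_slope.mp (hd1 τ hτK).hasDerivAt
      have h1' := h1.mono_left hle
      have h2 : Tendsto (slope u τ) (𝓝[Z \ {τ}] τ) (𝓝 0) := by
        apply Tendsto.congr' _ tendsto_const_nhds
        filter_upwards [self_mem_nhdsWithin] with y hy
        simp [slope, hy.1.2, huτ]
      exact tendsto_nhds_unique h1' h2
    exact hsimple τ hτK huτ hderiv
  have hZempty : Z = ∅ := by
    have := hncard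
    simp only [Nat.sub_self] at this
    exact (Set.ncard_eq_zero hZfin).mp this
  -- now positivity
  intro x hx
  by_contra hle0
  push_neg at hle0
  have hne : u x ≠ 0 := by
    intro h0
    have : x ∈ Z := ⟨hx, h0⟩
    simp [hZempty] at this
  have hneg : u x < 0 := lt_of_le_of_ne hle0 hne
  set p := min δ x / 2 with hp
  have hp0 : 0 < p := by
    have : 0 < min δ x := lt_min hδ hx.1
    simpa [hp] using half_pos this
  have hpδ : p < δ := by
    have : min δ x ≤ δ := min_le_left _ _
    linarith [hp0]
  have hpx : p < x := by
    have : min δ x ≤ x := min_le_right _ _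
    linarith [hp0]
  have hup : 0 < u p := hposδ p ⟨hp0, hpδ⟩
  have hcont : ContinuousOn u (Icc p x) := by
    intro y hy
    exact ((hd1 y ⟨le_trans hp0.le hy.1, le_trans hy.2 hx.2.le⟩).continuousAt).continuousWithinAt
  have : (0:ℝ) ∈ Ioo (u x) (u p) := ⟨hneg, hup⟩
  obtain ⟨c, hc, hc0⟩ := intermediate_value_Ioo' hpx.le hcont this
  have : c ∈ Z := ⟨⟨lt_trans hp0 hc.1, lt_trans hc.2 hx.2⟩, hc0⟩
  simp [hZempty] at this
lemma energy_const {κ lam : ℝ} {u : ℝ → ℝ} (hs : SolODE κ lam u 0 1) :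
    ∀ x ∈ Icc (0:ℝ) 1,
      (1 + κ * (deriv u x) ^ 2) ^ (-(1:ℝ)/2) - κ * lam * (u x) ^ 2 / 2
        = (1 + κ * (deriv u 0) ^ 2) ^ (-(1:ℝ)/2) - κ * lam * (u 0) ^ 2 / 2 := by
  obtain ⟨hd1, hd2, hc2, hpos, hode⟩ := hs
  set E : ℝ → ℝ := fun x =>
    (1 + κ * (deriv u x) ^ 2) ^ (-(1:ℝ)/2) - κ * lam * (u x) ^ 2 / 2 with hE
  have key : ∀ x ∈ Icc (0:ℝ) 1, HasDerivAt E 0 x := by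
    intro x hx
    set v := deriv u x with hv
    set w := deriv (deriv u) x with hw
    set t := 1 + κ * v ^ 2 with ht
    have htpos : 0 < t := hpos x hx
    have hdu : HasDerivAt u v x := (hd1 x hx).hasDerivAt
    have hdv : HasDerivAt (deriv u) w x := (hd2 x hx).hasDerivAt
    have h2 : HasDerivAt (fun y => 1 + κ * (deriv u y) ^ 2) (κ * (2 * v * w)) x := by
      have := ((hdv.fun_pow 2).const_mul κ).const_add 1
      refine this.congr_deriv ?_
      ring
    have h3 : HasDerivAt (fun y : ℝ => y ^ (-(1:ℝ)/2)) ((-(1:ℝ)/2) * t ^ (-(1:ℝ)/2 - 1)) t :=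
      Real.hasDerivAt_rpow_const (Or.inl (ne_of_gt htpos))
    have h4 : HasDerivAt (fun y => (1 + κ * (deriv u y) ^ 2) ^ (-(1:ℝ)/2))
        (((-(1:ℝ)/2) * t ^ (-(1:ℝ)/2 - 1)) * (κ * (2 * v * w))) x := by have := h3.comp x h2; exact this
    have h5 : HasDerivAt (fun y => κ * lam * (u y) ^ 2 / 2) (κ * lam * (2 * u x * v) / 2) x := by
      have := ((hdu.fun_pow 2).const_mul (κ * lam)).div_const 2
      refine this.congr_deriv ?_
      ring
    have h6 := h4.sub h5
    have hwx : w = -(lam * u x * t ^ ((3:ℝ)/2)) := by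
      have := hode x hx
      rw [← hv, ← ht] at this
      linarith [this]
    have hD : ((-(1:ℝ)/2) * t ^ (-(1:ℝ)/2 - 1)) * (κ * (2 * v * w))
        - κ * lam * (2 * u x * v) / 2 = 0 := by
      rw [hwx]
      have he : (-(1:ℝ)/2 - 1) = -((3:ℝ)/2) := by norm_num
      rw [he, Real.rpow_neg htpos.le]
      have hA : (0:ℝ) < t ^ ((3:ℝ)/2) := Real.rpow_pos_of_pos htpos _
      field_simp
      ring
    rw [hD] at h6
    exact h6
  have hcont : ContinuousOn E (Icc (0:ℝ) 1) :=
    fun x hx => (key x hx).continuousAt.continuousWithinAt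
  intro x hx
  exact constant_of_has_deriv_right_zero hcont
    (fun y hy => ((key y (Ico_subset_Icc_self hy)).hasDerivWithinAt)) x hx

open Topology in
lemma sturm {κ lam : ℝ} {u : ℝ → ℝ} (hs : SolODE κ lam u 0 1)
    (hb0 : u 0 = 0) (hb1 : u 1 = 0) (hupos : ∀ x ∈ Ioo (0:ℝ) 1, 0 < u x) :
    ∃ x ∈ Ioo (0:ℝ) 1, lam * (1 + κ * (deriv u x) ^ 2) ^ ((3:ℝ)/2) ≤ π ^ 2 := by
  obtain ⟨hd1, hd2, hc2, hpos, hode⟩ := hs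
  by_contra hcon
  push_neg at hcon
  -- hcon : ∀ x ∈ Ioo 0 1, π ^ 2 < lam * q x
  set F : ℝ → ℝ := fun x => deriv u x * Real.sin (π * x) - u x * (π * Real.cos (π * x))
    with hF
  set G : ℝ → ℝ := fun x => deriv (deriv u) x * Real.sin (π * x)
    + π ^ 2 * (u x * Real.sin (π * x)) with hG
  have hcontu : ContinuousOn u (Icc (0:ℝ) 1) :=
    fun x hx => (hd1 x hx).continuousAt.continuousWithinAt
  have hcontv : ContinuousOn (deriv u) (Icc (0:ℝ) 1) :=
    fun x hx => (hd2 x hx).continuousAt.continuousWithinAt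
  have hderivF : ∀ x ∈ uIcc (0:ℝ) 1, HasDerivAt F (G x) x := by
    intro x hx
    rw [uIcc_of_le (zero_le_one)] at hx
    have hdu : HasDerivAt u (deriv u x) x := (hd1 x hx).hasDerivAt
    have hdv : HasDerivAt (deriv u) (deriv (deriv u) x) x := (hd2 x hx).hasDerivAt
    have hsin : HasDerivAt (fun y : ℝ => Real.sin (π * y)) (Real.cos (π * x) * (π * 1)) x :=
      (Real.hasDerivAt_sin (π * x)).comp x ((hasDerivAt_id x).const_mul π)
    have hcos : HasDerivAt (fun y : ℝ => π * Real.cos (π * y)) (π * (-Real.sin (π * x) * (π * 1))) x :=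
      (((Real.hasDerivAt_cos (π * x)).comp x ((hasDerivAt_id x).const_mul π))).const_mul π
    have h1 := (hdv.fun_mul hsin).fun_sub (hdu.fun_mul hcos)
    refine h1.congr_deriv ?_
    simp only [hG]
    ring
  have hcontG : ContinuousOn G (Icc (0:ℝ) 1) := by
    apply ContinuousOn.add
    · exact hc2.mul ((Real.continuous_sin.comp (continuous_const.mul continuous_id)).continuousOn)
    · exact (continuousOn_const.mul (hcontu.mul
        ((Real.continuous_sin.comp (continuous_const.mul continuous_id)).continuousOn)))
  have hintG : IntervalIntegrable G MeasureTheory.volume 0 1 := by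
    apply ContinuousOn.intervalIntegrable
    rwa [uIcc_of_le zero_le_one]
  have hFTC : ∫ x in (0:ℝ)..1, G x = F 1 - F 0 :=
    intervalIntegral.integral_eq_sub_of_hasDerivAt hderivF hintG
  have hF1 : F 1 = 0 := by simp [hF, hb1, Real.sin_pi]
  have hF0 : F 0 = 0 := by simp [hF, hb0]
  have hzero : ∫ x in (0:ℝ)..1, G x = 0 := by rw [hFTC, hF1, hF0]; ring
  -- but G < 0 on Ioo
  have hGneg : ∀ x ∈ Ioo (0:ℝ) 1, 0 < -G x := by
    intro x hx
    have hxI : x ∈ Icc (0:ℝ) 1 := Ioo_subset_Icc_self hx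
    have hq := hcon x hx
    have hu := hupos x hx
    have hsinpos : 0 < Real.sin (π * x) := by
      apply Real.sin_pos_of_pos_of_lt_pi
      · exact mul_pos Real.pi_pos hx.1
      · calc π * x < π * 1 := by
              exact mul_lt_mul_of_pos_left hx.2 Real.pi_pos
          _ = π := mul_one π
    have hw : deriv (deriv u) x = -(lam * u x * (1 + κ * (deriv u x) ^ 2) ^ ((3:ℝ)/2)) := by
      linarith [hode x hxI]
    simp only [hG, hw]
    have : π ^ 2 * u x < lam * (1 + κ * (deriv u x) ^ 2) ^ ((3:ℝ)/2) * u x :=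
      mul_lt_mul_of_pos_right hq hu
    nlinarith [hsinpos, this]
  have hposint : 0 < ∫ x in (0:ℝ)..1, -G x :=
    intervalIntegral.intervalIntegral_pos_of_pos_on hintG.neg hGneg zero_lt_one
  rw [intervalIntegral.integral_neg, hzero] at hposint
  simp at hposint

open Topology in
set_option maxHeartbeats 1000000 in
theorem stmt16 (κ : ℝ) (hκ : κ < 0) :
    ∀ ε > 0, ∃ M > 0, ∀ lam : ℝ, M < lam →
      ∀ u : ℝ → ℝ, SPlus κ lam 1 u →
        |deriv u 0 - 1 / Real.sqrt (-κ)| < ε := by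
  intro ε hε
  set k := -κ with hk
  have hκk : κ = -k := by rw [hk]; ring
  have hk0 : 0 < k := by linarith
  set r := Real.sqrt k with hrdef
  have hr : 0 < r := Real.sqrt_pos.mpr hk0
  have hr2 : r ^ 2 = k := Real.sq_sqrt hk0.le
  set c := ε * r with hc
  have hc0 : 0 < c := mul_pos hε hr
  clear_value k r c
  refine ⟨max 1 (π ^ 2 / c ^ ((3:ℝ)/2)), lt_of_lt_of_le zero_lt_one (le_max_left _ _), ?_⟩
  intro lam hlam u hu
  have hlam1 : (1:ℝ) < lam := lt_of_le_of_lt (le_max_left _ _) hlam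
  have hlam0 : (0:ℝ) < lam := by linarith
  have hcr : 0 < c ^ ((3:ℝ)/2) := Real.rpow_pos_of_pos hc0 _
  have hPiLam : π ^ 2 / lam < c ^ ((3:ℝ)/2) := by
    have h1 : π ^ 2 / c ^ ((3:ℝ)/2) < lam := lt_of_le_of_lt (le_max_right _ _) hlam
    rw [div_lt_iff₀ hlam0]
    rw [div_lt_iff₀ hcr] at h1
    nlinarith
  have hSP := hu
  obtain ⟨⟨hsol, hb0, hb1⟩, -, -, hsimple, δ, hδ, hposδ⟩ := hu
  have hupos := uPos hSP
  obtain ⟨x, hx, hq⟩ := sturm hsol hb0 hb1 hupos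
  have hE := energy_const hsol x (Ioo_subset_Icc_self hx)
  obtain ⟨hd1, hd2, hc2, hpos, hode⟩ := hsol
  set s := deriv u 0 with hs
  set v := deriv u x with hv
  set t := 1 + κ * v ^ 2 with ht
  have hxI : x ∈ Icc (0:ℝ) 1 := Ioo_subset_Icc_self hx
  have h0I : (0:ℝ) ∈ Icc (0:ℝ) 1 := ⟨le_refl _, zero_le_one⟩
  have htpos : 0 < t := hpos x hxI
  have hapos : 0 < 1 + κ * s ^ 2 := hpos 0 h0I
  have hdu0 : HasDerivAt u s 0 := (hd1 0 h0I).hasDerivAt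
  clear_value s v t
  -- t < c
  have htc : t < c := by
    by_contra hcon
    push_neg at hcon
    have h1 : c ^ ((3:ℝ)/2) ≤ t ^ ((3:ℝ)/2) :=
      Real.rpow_le_rpow hc0.le hcon (by norm_num)
    have hl : t ^ ((3:ℝ)/2) ≤ π ^ 2 / lam := by
      rw [le_div_iff₀ hlam0]
      nlinarith [hq]
    linarith
  -- energy step : 1 + κ s² ≤ t
  have hat : 1 + κ * s ^ 2 ≤ t := by
    have hterm : 0 ≤ -(κ * lam * (u x) ^ 2 / 2) := by
      have hkl : κ * lam < 0 := mul_neg_of_neg_of_pos hκ hlam0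
      nlinarith [sq_nonneg (u x)]
    have hEineq : t ^ (-(1:ℝ)/2) ≤ (1 + κ * s ^ 2) ^ (-(1:ℝ)/2) := by
      rw [hb0] at hE
      norm_num at hE
      linarith [hE, hterm]
    by_contra hcon
    push_neg at hcon
    have := Real.rpow_lt_rpow_of_neg htpos hcon (by norm_num : (-(1:ℝ)/2) < 0)
    linarith
  have hsub : κ * s ^ 2 = -(k * s ^ 2) := by rw [hκk]; ring
  have hks : 1 - k * s ^ 2 < c := by linarith [hat, htc, hsub]
  have hks2 : k * s ^ 2 < 1 := by linarith [hapos, hsub]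
  -- s ≥ 0
  have hs0 : 0 ≤ s := by
    have htend : Tendsto (slope u 0) (𝓝[>] (0:ℝ)) (𝓝 s) :=
      (hasDerivAt_iff_tendsto_slope.mp hdu0).mono_left
        (nhdsWithin_mono 0 (fun y hy => ne_of_gt hy))
    refine ge_of_tendsto htend ?_
    filter_upwards [Ioo_mem_nhdsGT_of_mem ⟨le_refl (0:ℝ), hδ⟩] with y hy
    have h1 := hposδ y hy
    have h2 : slope u 0 y = u y / y := by
      simp [slope, hb0, inv_mul_eq_div]
    rw [h2]
    exact le_of_lt (div_pos h1 hy.1)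
  -- conclude
  clear hE hq hcr hPiLam hlam hode hc2 hd1 hd2 hsimple hposδ hupos hSP hdu0 hb0 hb1 hpos
  have ha : (r * s) ^ 2 = k * s ^ 2 := by rw [← hr2]; ring
  have hrs1 : r * s < 1 := by nlinarith [ha, hks2, mul_nonneg hr.le hs0]
  have hfin : 1 - ε * r < r * s := by
    nlinarith [ha, hks, hrs1, mul_nonneg hr.le hs0]
  have h1 : 1 / r - s < ε := by
    have h2 : (1 - s * r) / r < ε := (div_lt_iff₀ hr).mpr (by nlinarith [hfin])
    have h3 : 1 / r - s = (1 - s * r) / r := by field_simp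
    linarith [h3 ▸ h2]
  have hsr : s < 1 / r := by
    rw [lt_div_iff₀ hr]
    nlinarith [hrs1]
  apply abs_lt.mpr
  constructor <;> [linarith; linarith]
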